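/- Let f be a monotone submodular function on finite E with f(∅)=0 arising from a laminar family: f(S) := min{ ∑_{T ∈ 𝒮} B_T : 𝒮 ⊆ ℒ covers S }, where ℒ is a laminar family of subsets of E whose union is E, and B_T ≥ 0 for each T ∈ ℒ. Then f is monotone and submodular. -/

import Mathlib

open Finset

variable {E : Type*} [Fintype E] [DecidableEq E]

/-- The minimum budget of a sub-family of the laminar family `ℒ` covering `S`. -/
noncomputable def laminarF (ℒ : Finset (Finset E)) (B : Finset E → ℝ) (S : Finset E) : ℝ :=
  sInf {r | ∃ 𝒮 : Finset (Finset E), 𝒮 ⊆ ℒ ∧ S ⊆ 𝒮.biUnion id ∧ r = ∑ T ∈ 𝒮, B T}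

lemma laminarF_bddBelow (ℒ : Finset (Finset E)) (B : Finset E → ℝ) (hB : ∀ T, 0 ≤ B T)
    (S : Finset E) :
    BddBelow {r | ∃ 𝒮 : Finset (Finset E), 𝒮 ⊆ ℒ ∧ S ⊆ 𝒮.biUnion id ∧ r = ∑ T ∈ 𝒮, B T} := by
  refine ⟨0, fun r hr => ?_⟩
  obtain ⟨𝒮, -, -, rfl⟩ := hr
  exact Finset.sum_nonneg fun T _ => hB T

lemma laminarF_nonempty (ℒ : Finset (Finset E)) (B : Finset E → ℝ)
    (hcover : ∀ e : E, ∃ T ∈ ℒ, e ∈ T) (S : Finset E) :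
    Set.Nonempty {r | ∃ 𝒮 : Finset (Finset E), 𝒮 ⊆ ℒ ∧ S ⊆ 𝒮.biUnion id ∧ r = ∑ T ∈ 𝒮, B T} := by
  refine ⟨∑ T ∈ ℒ, B T, ℒ, subset_rfl, ?_, rfl⟩
  intro e _
  obtain ⟨T, hT, heT⟩ := hcover e
  exact Finset.mem_biUnion.2 ⟨T, hT, heT⟩

theorem laminarF_monotone_submodular (ℒ : Finset (Finset E)) (B : Finset E → ℝ)
    -- ℒ is laminar
    (hlam : ∀ A ∈ ℒ, ∀ C ∈ ℒ, A ⊆ C ∨ C ⊆ A ∨ Disjoint A C)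
    -- ℒ covers the ground set
    (hcover : ∀ e : E, ∃ T ∈ ℒ, e ∈ T)
    -- budgets are nonnegative
    (hB : ∀ T, 0 ≤ B T) :
    (∀ A C : Finset E, A ⊆ C → laminarF ℒ B A ≤ laminarF ℒ B C) ∧
    (∀ A C : Finset E,
      laminarF ℒ B (A ∪ C) + laminarF ℒ B (A ∩ C) ≤ laminarF ℒ B A + laminarF ℒ B C) := by
  classical
  constructor
  · intro A C hAC
    apply csInf_le_csInf (laminarF_bddBelow ℒ B hB A) (laminarF_nonempty ℒ B hcover C)
    rintro r ⟨𝒮, h𝒮, hcov, rfl⟩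
    exact ⟨𝒮, h𝒮, hAC.trans hcov, rfl⟩
  · intro A C
    -- key claim: for any covers X of A and Y of C,
    -- f(A∪C) + f(A∩C) ≤ ∑ X + ∑ Y.
    have key : ∀ X Y : Finset (Finset E), X ⊆ ℒ → Y ⊆ ℒ →
        A ⊆ X.biUnion id → C ⊆ Y.biUnion id →
        laminarF ℒ B (A ∪ C) + laminarF ℒ B (A ∩ C) ≤ (∑ T ∈ X, B T) + ∑ T ∈ Y, B T := by
      intro X Y hXL hYL hAX hCY
      set p : Finset E → Prop := fun T => ∃ T' ∈ Y, T ⊆ T' with hp_def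
      set q : Finset E → Prop := fun T => ∃ T' ∈ X, T ⊂ T' with hq_def
      set U : Finset (Finset E) := X.filter (fun T => ¬ p T) ∪ Y.filter (fun T => ¬ q T) with hU
      set V : Finset (Finset E) := X.filter p ∪ Y.filter q with hV
      have hUL : U ⊆ ℒ :=
        Finset.union_subset ((Finset.filter_subset _ _).trans hXL)
          ((Finset.filter_subset _ _).trans hYL)
      have hVL : V ⊆ ℒ :=
        Finset.union_subset ((Finset.filter_subset _ _).trans hXL)
          ((Finset.filter_subset _ _).trans hYL)
      -- U covers A ∪ C
      have hUcov : A ∪ C ⊆ U.biUnion id := by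
        intro e he
        have hsome : ∃ T ∈ X ∪ Y, e ∈ T := by
          rcases Finset.mem_union.1 he with h | h
          · obtain ⟨T, hT, heT⟩ := Finset.mem_biUnion.1 (hAX h)
            exact ⟨T, Finset.mem_union_left _ hT, heT⟩
          · obtain ⟨T, hT, heT⟩ := Finset.mem_biUnion.1 (hCY h)
            exact ⟨T, Finset.mem_union_right _ hT, heT⟩
        set 𝒯 : Finset (Finset E) := (X ∪ Y).filter (fun T => e ∈ T) with h𝒯
        have h𝒯ne : 𝒯.Nonempty := by
          obtain ⟨T, hT, heT⟩ := hsome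
          exact ⟨T, Finset.mem_filter.2 ⟨hT, heT⟩⟩
        obtain ⟨M, hM, hmax⟩ : ∃ M ∈ 𝒯, ∀ x ∈ 𝒯, ¬ M ⊂ x := by
          obtain ⟨M, hM⟩ := Finset.exists_maximal h𝒯ne
          exact ⟨M, hM.1, fun x hx hlt => hlt.2 (hM.2 hx hlt.1)⟩
        have hMXY := (Finset.mem_filter.1 hM).1
        have heM : e ∈ M := (Finset.mem_filter.1 hM).2
        -- if M ∈ Y (or p M holds), M lands in the Y-part; otherwise the X-part
        have hMY_case : ∀ M' ∈ Y, e ∈ M' → (∀ x ∈ 𝒯, ¬ M' ⊂ x) → e ∈ U.biUnion id := by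
          intro M' hM'Y heM' hmax'
          have hnq : ¬ q M' := by
            rintro ⟨T', hT'X, hlt⟩
            exact hmax' T' (Finset.mem_filter.2
              ⟨Finset.mem_union_left _ hT'X, hlt.subset heM'⟩) hlt
          exact Finset.mem_biUnion.2 ⟨M', Finset.mem_union_right _
            (Finset.mem_filter.2 ⟨hM'Y, hnq⟩), heM'⟩
        by_cases hpM : p M
        · obtain ⟨T', hT'Y, hsub⟩ := hpM
          have heT' : e ∈ T' := hsub heM
          have : M = T' := by
            by_contra hne
            exact hmax T' (Finset.mem_filter.2 ⟨Finset.mem_union_right _ hT'Y, heT'⟩)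
              (ssubset_of_subset_of_ne hsub hne)
          subst this
          exact hMY_case M hT'Y heM hmax
        · rcases Finset.mem_union.1 hMXY with hMX | hMY
          · exact Finset.mem_biUnion.2 ⟨M, Finset.mem_union_left _
              (Finset.mem_filter.2 ⟨hMX, hpM⟩), heM⟩
          · exact absurd ⟨M, hMY, subset_rfl⟩ hpM
      -- V covers A ∩ C
      have hVcov : A ∩ C ⊆ V.biUnion id := by
        intro e he
        obtain ⟨TA, hTAX, heTA⟩ := Finset.mem_biUnion.1 (hAX (Finset.mem_inter.1 he).1)
        obtain ⟨TC, hTCY, heTC⟩ := Finset.mem_biUnion.1 (hCY (Finset.mem_inter.1 he).2)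
        rcases hlam TA (hXL hTAX) TC (hYL hTCY) with hsub | hsub | hdis
        · exact Finset.mem_biUnion.2 ⟨TA, Finset.mem_union_left _
            (Finset.mem_filter.2 ⟨hTAX, TC, hTCY, hsub⟩), heTA⟩
        · by_cases hsub' : TA ⊆ TC
          · exact Finset.mem_biUnion.2 ⟨TA, Finset.mem_union_left _
              (Finset.mem_filter.2 ⟨hTAX, TC, hTCY, hsub'⟩), heTA⟩
          · exact Finset.mem_biUnion.2 ⟨TC, Finset.mem_union_right _
              (Finset.mem_filter.2 ⟨hTCY, TA, hTAX, ⟨hsub, hsub'⟩⟩), heTC⟩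
        · exact absurd (hdis.forall_ne_finset heTA heTC) (by simp)
      -- the two filtered pieces of U are disjoint
      have hUdisj : Disjoint (X.filter (fun T => ¬ p T)) (Y.filter (fun T => ¬ q T)) := by
        rw [Finset.disjoint_left]
        intro T hT1 hT2
        have hTY : T ∈ Y := (Finset.mem_filter.1 hT2).1
        exact (Finset.mem_filter.1 hT1).2 ⟨T, hTY, subset_rfl⟩
      -- sum accounting
      have hUsum : ∑ T ∈ U, B T =
          (∑ T ∈ X.filter (fun T => ¬ p T), B T) + ∑ T ∈ Y.filter (fun T => ¬ q T), B T :=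
        Finset.sum_union hUdisj
      have hVsum : ∑ T ∈ V, B T ≤
          (∑ T ∈ X.filter p, B T) + ∑ T ∈ Y.filter q, B T := by
        have := Finset.sum_union_inter (s₁ := X.filter p) (s₂ := Y.filter q) (f := B)
        have hnn : 0 ≤ ∑ T ∈ (X.filter p ∩ Y.filter q), B T :=
          Finset.sum_nonneg fun T _ => hB T
        linarith [this]
      have hfU : laminarF ℒ B (A ∪ C) ≤ ∑ T ∈ U, B T :=
        csInf_le (laminarF_bddBelow ℒ B hB _) ⟨U, hUL, hUcov, rfl⟩
      have hfV : laminarF ℒ B (A ∩ C) ≤ ∑ T ∈ V, B T :=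
        csInf_le (laminarF_bddBelow ℒ B hB _) ⟨V, hVL, hVcov, rfl⟩
      have hXsplit : (∑ T ∈ X.filter p, B T) + ∑ T ∈ X.filter (fun T => ¬ p T), B T
          = ∑ T ∈ X, B T := Finset.sum_filter_add_sum_filter_not X p B
      have hYsplit : (∑ T ∈ Y.filter q, B T) + ∑ T ∈ Y.filter (fun T => ¬ q T), B T
          = ∑ T ∈ Y, B T := Finset.sum_filter_add_sum_filter_not Y q B
      linarith
    -- pass from covers to infima
    have h1 : ∀ r ∈ {r | ∃ 𝒮 : Finset (Finset E), 𝒮 ⊆ ℒ ∧ A ⊆ 𝒮.biUnion id ∧ r = ∑ T ∈ 𝒮, B T},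
        laminarF ℒ B (A ∪ C) + laminarF ℒ B (A ∩ C) - laminarF ℒ B C ≤ r := by
      rintro r ⟨X, hX, hAX, rfl⟩
      rw [sub_le_iff_le_add]
      have h2 : laminarF ℒ B (A ∪ C) + laminarF ℒ B (A ∩ C) - (∑ T ∈ X, B T) ≤
          laminarF ℒ B C := by
        apply le_csInf (laminarF_nonempty ℒ B hcover C)
        rintro s ⟨Y, hY, hCY, rfl⟩
        rw [sub_le_iff_le_add']
        exact key X Y hX hY hAX hCY
      linarith
    have := le_csInf (laminarF_nonempty ℒ B hcover A) h1
    have hfa : laminarF ℒ B A = sInf {r | ∃ 𝒮 : Finset (Finset E),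
        𝒮 ⊆ ℒ ∧ A ⊆ 𝒮.biUnion id ∧ r = ∑ T ∈ 𝒮, B T} := rfl
    linarith [this]
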